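/- For every n ≥ 2 and every 0 ≤ k ≤ n, the number of π ∈ D_n of type '0,1' with exactly k D-descents equals the number of π ∈ D_n of type '≥2' with exactly n-k D-descents; equivalently, D_n^{0,1}(t) = t^n·D_n^{≥2}(t^{-1}) and D_n^{≥2}(t) = t^n·D_n^{0,1}(t^{-1}). -/

import Mathlib

/-- A signed permutation of `{1,…,n}`, encoded as an (unsigned) permutation of
`Fin n` together with a choice of sign for each position.  The associated
word is `π_1 π_2 ⋯ π_n` where `π_j = ± σ(j)`. -/
abbrev SignedPerm (n : ℕ) := Equiv.Perm (Fin n) × (Fin n → Bool)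

namespace SignedPerm

/-- The letter `π_j` of the word of `p`, for `1 ≤ j ≤ n` (and `0` otherwise). -/
def word {n : ℕ} (p : SignedPerm n) (j : ℕ) : ℤ :=
  if h : 1 ≤ j ∧ j ≤ n then
    (if p.2 ⟨j - 1, by omega⟩ then -1 else 1) * ((p.1 ⟨j - 1, by omega⟩ : ℕ) + 1)
  else 0

/-- The letter `π_j`, with the type `D` convention `π_0 = -π_2`. -/
def entry {n : ℕ} (p : SignedPerm n) (j : ℕ) : ℤ :=
  if j = 0 then -(p.word 2) else p.word j

/-- The set of `D`-descents of `p`: those `i ∈ {0,…,n-1}` with `π_i > π_{i+1}`. -/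
def ddes {n : ℕ} (p : SignedPerm n) : Finset ℕ :=
  (Finset.range n).filter fun i => p.entry (i + 1) < p.entry i

/-- The number of `D`-descents of `p`. -/
def d {n : ℕ} (p : SignedPerm n) : ℕ := p.ddes.card

/-- Membership in the type `D` Coxeter group `D_n ⊆ B_n`:
the number of negative letters is even. -/
def inD {n : ℕ} (p : SignedPerm n) : Prop :=
  Even (Finset.univ.filter (fun i => p.2 i = true)).card

/-- Type '1': descent at position `1` but not at `0`. -/
def type1 {n : ℕ} (p : SignedPerm n) : Prop := 1 ∈ p.ddes ∧ 0 ∉ p.ddes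

/-- Type '0,1': descents at both positions `0` and `1`. -/
def type01 {n : ℕ} (p : SignedPerm n) : Prop := 0 ∈ p.ddes ∧ 1 ∈ p.ddes

/-- Type '≥2': no descent at positions `0` and `1`. -/
def typeGe2 {n : ℕ} (p : SignedPerm n) : Prop := 0 ∉ p.ddes ∧ 1 ∉ p.ddes

/-- Type '0,≥2': descent at position `0` but not at `1`. -/
def type0Ge2 {n : ℕ} (p : SignedPerm n) : Prop := 0 ∈ p.ddes ∧ 1 ∉ p.ddes

instance {n : ℕ} (p : SignedPerm n) : Decidable p.inD := by
  unfold SignedPerm.inD; infer_instance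
instance {n : ℕ} (p : SignedPerm n) : Decidable p.type1 := by
  unfold SignedPerm.type1; infer_instance
instance {n : ℕ} (p : SignedPerm n) : Decidable p.type01 := by
  unfold SignedPerm.type01; infer_instance
instance {n : ℕ} (p : SignedPerm n) : Decidable p.typeGe2 := by
  unfold SignedPerm.typeGe2; infer_instance
instance {n : ℕ} (p : SignedPerm n) : Decidable p.type0Ge2 := by
  unfold SignedPerm.type0Ge2; infer_instance

end SignedPerm

/-- The type `D` Eulerian number `D_{n,k}`: the number of elements of `D_n`
with exactly `k` `D`-descents (zero for `k < 0`). -/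
def eulerD (n : ℕ) (k : ℤ) : ℕ :=
  (Finset.univ.filter fun p : SignedPerm n => p.inD ∧ (p.d : ℤ) = k).card

/-- The sub-Eulerian number `D_{n,k}^1`. -/
def subEuler1 (n : ℕ) (k : ℤ) : ℕ :=
  (Finset.univ.filter fun p : SignedPerm n => p.inD ∧ p.type1 ∧ (p.d : ℤ) = k).card

/-- The sub-Eulerian number `D_{n,k}^{0,1}`. -/
def subEuler01 (n : ℕ) (k : ℤ) : ℕ :=
  (Finset.univ.filter fun p : SignedPerm n => p.inD ∧ p.type01 ∧ (p.d : ℤ) = k).card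

/-- The sub-Eulerian number `D_{n,k}^{≥2}`. -/
def subEulerGe2 (n : ℕ) (k : ℤ) : ℕ :=
  (Finset.univ.filter fun p : SignedPerm n => p.inD ∧ p.typeGe2 ∧ (p.d : ℤ) = k).card

/-- The sub-Eulerian number `D_{n,k}^{0,≥2}`. -/
def subEuler0Ge2 (n : ℕ) (k : ℤ) : ℕ :=
  (Finset.univ.filter fun p : SignedPerm n => p.inD ∧ p.type0Ge2 ∧ (p.d : ℤ) = k).card

/-- The type `D` Eulerian polynomial `D_n(t) = Σ_{π ∈ D_n} t^{d(π)}`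
(with `D_0(t) = D_1(t) = 1`). -/
noncomputable def polyD (n : ℕ) : Polynomial ℚ :=
  ∑ p ∈ Finset.univ.filter (fun p : SignedPerm n => p.inD), Polynomial.X ^ p.d

/-- The sub-Eulerian polynomial `D_n^1(t)`. -/
noncomputable def polyD1 (n : ℕ) : Polynomial ℚ :=
  ∑ p ∈ Finset.univ.filter (fun p : SignedPerm n => p.inD ∧ p.type1), Polynomial.X ^ p.d

/-- The sub-Eulerian polynomial `D_n^{0,1}(t)`. -/
noncomputable def polyD01 (n : ℕ) : Polynomial ℚ :=
  ∑ p ∈ Finset.univ.filter (fun p : SignedPerm n => p.inD ∧ p.type01), Polynomial.X ^ p.d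

/-- The sub-Eulerian polynomial `D_n^{≥2}(t)`. -/
noncomputable def polyDGe2 (n : ℕ) : Polynomial ℚ :=
  ∑ p ∈ Finset.univ.filter (fun p : SignedPerm n => p.inD ∧ p.typeGe2), Polynomial.X ^ p.d

/-- The sub-Eulerian polynomial `D_n^{0,≥2}(t)`. -/
noncomputable def polyD0Ge2 (n : ℕ) : Polynomial ℚ :=
  ∑ p ∈ Finset.univ.filter (fun p : SignedPerm n => p.inD ∧ p.type0Ge2), Polynomial.X ^ p.d

namespace Cor43

open Finset

variable {n : ℕ}

/-- Flip the sign at position `i`, except (when `n` is odd) at position `0`. -/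
def flipB (n : ℕ) (i : Fin n) : Bool := decide (n % 2 = 0 ∨ i.val ≠ 0)

/-- The descent-complementing involution on signed permutations. -/
def F (n : ℕ) (p : SignedPerm n) : SignedPerm n :=
  (p.1, fun i => xor (flipB n i) (p.2 i))

lemma F_F (p : SignedPerm n) : F n (F n p) = p := by
  refine Prod.ext rfl ?_
  funext i
  show xor (flipB n i) (xor (flipB n i) (p.2 i)) = p.2 i
  cases h : flipB n i <;> cases h2 : p.2 i <;> simp [h, h2]

lemma word_F (p : SignedPerm n) (j : ℕ) (h : 1 ≤ j ∧ j ≤ n) :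
    (F n p).word j = (if flipB n ⟨j - 1, by omega⟩ then -1 else 1) * p.word j := by
  unfold SignedPerm.word F
  rw [dif_pos h, dif_pos h]
  cases h1 : flipB n ⟨j - 1, by omega⟩ <;>
    cases h2 : p.2 ⟨j - 1, by omega⟩ <;>
    simp [h1, h2] <;> ring

lemma word_F_neg (p : SignedPerm n) (j : ℕ) (h2j : 2 ≤ j) (hj : j ≤ n) :
    (F n p).word j = -p.word j := by
  rw [word_F p j ⟨by omega, hj⟩]
  have : flipB n ⟨j - 1, by omega⟩ = true := by
    simp only [flipB, decide_eq_true_eq]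
    right; simp; omega
  rw [this]; simp

lemma word_F_one (hn : 1 ≤ n) (p : SignedPerm n) :
    (F n p).word 1 = (if n % 2 = 0 then -p.word 1 else p.word 1) := by
  rw [word_F p 1 ⟨le_refl _, hn⟩]
  by_cases hpar : n % 2 = 0
  · have : flipB n ⟨0, by omega⟩ = true := by
      simp only [flipB, decide_eq_true_eq]; left; exact hpar
    rw [this, if_pos hpar]; simp
  · have : flipB n ⟨0, by omega⟩ = false := by
      simp only [flipB, decide_eq_false_iff_not]
      push_neg
      exact ⟨hpar, rfl⟩
    rw [this, if_neg hpar]; simp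

lemma word_ne (p : SignedPerm n) {j k : ℕ} (hj : 1 ≤ j ∧ j ≤ n) (hk : 1 ≤ k ∧ k ≤ n)
    (hjk : j ≠ k) : p.word j ≠ p.word k ∧ p.word j ≠ -p.word k := by
  have hval : ((p.1 ⟨j - 1, by omega⟩ : Fin n) : ℕ) ≠ ((p.1 ⟨k - 1, by omega⟩ : Fin n) : ℕ) := by
    intro h
    have := p.1.injective (Fin.val_injective h)
    rw [Fin.mk.injEq] at this
    omega
  unfold SignedPerm.word
  rw [dif_pos hj, dif_pos hk]
  cases h1 : p.2 ⟨j - 1, by omega⟩ <;>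
    cases h2 : p.2 ⟨k - 1, by omega⟩ <;>
    simp only [if_true, if_false, Bool.false_eq_true, neg_mul, one_mul, neg_neg] <;>
    constructor <;> intro h <;> omega

lemma entry_pos (p : SignedPerm n) {j : ℕ} (hj : 1 ≤ j) : p.entry j = p.word j := by
  unfold SignedPerm.entry
  rw [if_neg (by omega)]

lemma entry_zero (p : SignedPerm n) : p.entry 0 = -p.word 2 := rfl

/-- The index permutation on descent positions: swaps `0` and `1` when `n` is odd. -/
def g (n i : ℕ) : ℕ := if n % 2 = 0 then i else if i = 0 then 1 else if i = 1 then 0 else i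

lemma g_g (m i : ℕ) : g m (g m i) = i := by
  unfold g; split_ifs <;> first | omega | exact (‹False›).elim

lemma g_lt (hn : 2 ≤ n) {i : ℕ} (hi : i < n) : g n i < n := by
  unfold g; split_ifs <;> first | omega | exact (‹False›).elim

lemma mem_ddes_iff (p : SignedPerm n) (i : ℕ) :
    i ∈ p.ddes ↔ i < n ∧ p.entry (i + 1) < p.entry i := by
  unfold SignedPerm.ddes
  rw [Finset.mem_filter, Finset.mem_range]

lemma mem_ddes_F (hn : 2 ≤ n) (p : SignedPerm n) {i : ℕ} (hi : i < n) :
    i ∈ (F n p).ddes ↔ g n i ∉ p.ddes := by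
  rw [mem_ddes_iff, mem_ddes_iff]
  match i with
  | 0 =>
    have hne := word_ne p (j := 1) (k := 2) ⟨le_rfl, by omega⟩ ⟨by omega, hn⟩ (by omega)
    rw [show (0:ℕ) + 1 = 1 from rfl, entry_pos (F n p) le_rfl, entry_zero (F n p),
      word_F_neg p 2 le_rfl hn, word_F_one (by omega) p]
    by_cases hpar : n % 2 = 0
    · have hg : g n 0 = 0 := by simp [g, hpar]
      rw [hg, show (0:ℕ) + 1 = 1 from rfl, entry_pos p le_rfl, entry_zero p, if_pos hpar]
      omega
    · have hg : g n 0 = 1 := by simp [g, hpar]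
      rw [hg, show (1:ℕ) + 1 = 2 from rfl, entry_pos p (by omega : (1:ℕ) ≤ 2),
        entry_pos p le_rfl, if_neg hpar]
      omega
  | 1 =>
    have hne := word_ne p (j := 1) (k := 2) ⟨le_rfl, by omega⟩ ⟨by omega, hn⟩ (by omega)
    rw [show (1:ℕ) + 1 = 2 from rfl, entry_pos (F n p) (by omega : (1:ℕ) ≤ 2),
      entry_pos (F n p) le_rfl, word_F_neg p 2 le_rfl hn, word_F_one (by omega) p]
    by_cases hpar : n % 2 = 0
    · have hg : g n 1 = 1 := by simp [g, hpar]
      rw [hg, show (1:ℕ) + 1 = 2 from rfl, entry_pos p (by omega : (1:ℕ) ≤ 2),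
        entry_pos p le_rfl, if_pos hpar]
      omega
    · have hg : g n 1 = 0 := by simp [g, hpar]
      rw [hg, show (0:ℕ) + 1 = 1 from rfl, entry_pos p le_rfl, entry_zero p, if_neg hpar]
      omega
  | (m + 2) =>
    have hne := word_ne p (j := m + 2) (k := m + 2 + 1) ⟨by omega, by omega⟩
      ⟨by omega, by omega⟩ (by omega)
    have hgi : g n (m + 2) = m + 2 := by
      unfold g; split_ifs <;> first | omega | exact (‹False›).elim
    rw [hgi, entry_pos (F n p) (by omega : (1:ℕ) ≤ m + 2 + 1),
      entry_pos (F n p) (by omega : (1:ℕ) ≤ m + 2),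
      entry_pos p (by omega : (1:ℕ) ≤ m + 2 + 1), entry_pos p (by omega : (1:ℕ) ≤ m + 2),
      word_F_neg p (m + 2 + 1) (by omega) (by omega), word_F_neg p (m + 2) (by omega) (by omega)]
    omega

lemma ddes_subset (p : SignedPerm n) : p.ddes ⊆ Finset.range n :=
  Finset.filter_subset _ _

lemma d_le (p : SignedPerm n) : p.d ≤ n := by
  have := Finset.card_le_card (ddes_subset p)
  simpa [SignedPerm.d] using this

lemma ddes_F_eq (hn : 2 ≤ n) (p : SignedPerm n) :
    (F n p).ddes = (Finset.range n).filter (fun i => g n i ∉ p.ddes) := by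
  ext i
  by_cases hi : i < n
  · rw [Finset.mem_filter, Finset.mem_range]
    simp only [hi, true_and]
    exact mem_ddes_F hn p hi
  · have h1 : i ∉ (F n p).ddes := fun h => hi (Finset.mem_range.mp (ddes_subset _ h))
    have h2 : i ∉ (Finset.range n).filter (fun i => g n i ∉ p.ddes) := fun h =>
      hi (Finset.mem_range.mp (Finset.mem_filter.mp h).1)
    simp [h1, h2]

lemma d_F (hn : 2 ≤ n) (p : SignedPerm n) : (F n p).d = n - p.d := by
  have hA : ((Finset.range n).filter (fun i => g n i ∈ p.ddes)).card = p.d := by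
    apply Finset.card_bij (fun a _ => g n a)
    · intro a ha
      exact (Finset.mem_filter.mp ha).2
    · intro a ha b hb hab
      have := congrArg (g n) hab
      rwa [g_g, g_g] at this
    · intro b hb
      have hbn : b < n := Finset.mem_range.mp (ddes_subset _ hb)
      refine ⟨g n b, ?_, g_g n b⟩
      rw [Finset.mem_filter, Finset.mem_range]
      exact ⟨g_lt hn hbn, by rw [g_g]; exact hb⟩
  unfold SignedPerm.d
  rw [ddes_F_eq hn p, Finset.filter_not, Finset.card_sdiff_of_subset (Finset.filter_subset _ _),
    Finset.card_range, hA]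
  rfl

lemma card_flip_even (hn : 2 ≤ n) :
    Even (Finset.univ.filter (fun i : Fin n => flipB n i = true)).card := by
  have key := Finset.card_filter_add_card_filter_not
    (s := (Finset.univ : Finset (Fin n))) (p := fun i => flipB n i = true)
  rw [Finset.card_univ, Fintype.card_fin] at key
  by_cases hpar : n % 2 = 0
  · have hempty : (Finset.univ.filter (fun i : Fin n => ¬ flipB n i = true)) = ∅ := by
      ext i
      simp [flipB, hpar]
    rw [hempty, Finset.card_empty] at key
    rw [Nat.even_iff]
    omega
  · have hsingle : (Finset.univ.filter (fun i : Fin n => ¬ flipB n i = true))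
        = {(⟨0, by omega⟩ : Fin n)} := by
      ext i
      simp only [Finset.mem_filter, Finset.mem_univ, true_and, Finset.mem_singleton,
        flipB, decide_eq_true_eq, not_or, not_not, Fin.ext_iff]
      constructor
      · rintro ⟨-, h⟩; exact h
      · intro h; exact ⟨hpar, h⟩
    rw [hsingle, Finset.card_singleton] at key
    rw [Nat.even_iff]
    omega

lemma inD_F (hn : 2 ≤ n) (p : SignedPerm n) : (F n p).inD ↔ p.inD := by
  unfold SignedPerm.inD
  have hF2 : (F n p).2 = fun i => xor (flipB n i) (p.2 i) := rfl
  rw [hF2]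
  have key : Even ((Finset.univ.filter (fun i : Fin n => xor (flipB n i) (p.2 i) = true)).card
      + (Finset.univ.filter (fun i : Fin n => p.2 i = true)).card) := by
    rw [Finset.card_filter, Finset.card_filter, ← Finset.sum_add_distrib]
    rw [← Finset.sum_filter_add_sum_filter_not Finset.univ (fun i => flipB n i = true)]
    apply Even.add
    · have hone : ∀ i ∈ Finset.univ.filter (fun i : Fin n => flipB n i = true),
          ((if xor (flipB n i) (p.2 i) = true then 1 else 0)
            + (if p.2 i = true then 1 else 0)) = 1 := by
        intro i hi
        have hfl : flipB n i = true := (Finset.mem_filter.mp hi).2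
        rw [hfl]
        cases h2 : p.2 i <;> simp [h2]
      rw [Finset.sum_congr rfl hone, Finset.sum_const, smul_eq_mul, mul_one]
      exact card_flip_even hn
    · have htwo : ∀ i ∈ Finset.univ.filter (fun i : Fin n => ¬ flipB n i = true),
          Even ((if xor (flipB n i) (p.2 i) = true then 1 else 0)
            + (if p.2 i = true then 1 else 0)) := by
        intro i hi
        have hfl : flipB n i = false := by
          have := (Finset.mem_filter.mp hi).2
          simpa using this
        rw [hfl]
        cases h2 : p.2 i <;> simp [h2]
      exact Finset.even_sum _ htwo
  rw [Nat.even_add] at key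
  exact key

lemma type01_F (hn : 2 ≤ n) (p : SignedPerm n) (h : p.type01) : (F n p).typeGe2 := by
  obtain ⟨h0, h1⟩ := h
  constructor
  · intro hmem
    have := (mem_ddes_F hn p (by omega : 0 < n)).mp hmem
    unfold g at this
    by_cases hpar : n % 2 = 0 <;> simp [hpar] at this <;> [exact this h0; exact this h1]
  · intro hmem
    have := (mem_ddes_F hn p (by omega : 1 < n)).mp hmem
    unfold g at this
    by_cases hpar : n % 2 = 0 <;> simp [hpar] at this <;> [exact this h1; exact this h0]

lemma typeGe2_F (hn : 2 ≤ n) (p : SignedPerm n) (h : p.typeGe2) : (F n p).type01 := by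
  obtain ⟨h0, h1⟩ := h
  constructor
  · rw [mem_ddes_F hn p (by omega : 0 < n)]
    unfold g
    by_cases hpar : n % 2 = 0 <;> simp [hpar] <;> assumption
  · rw [mem_ddes_F hn p (by omega : 1 < n)]
    unfold g
    by_cases hpar : n % 2 = 0 <;> simp [hpar] <;> assumption

end Cor43

/-- **Corollary 4.3 (ii)–(iii).** `D_{n,k}^{0,1} = D_{n,n-k}^{≥2}` for `0 ≤ k ≤ n`, i.e.
`D_n^{0,1}(t) = t^n·D_n^{≥2}(t⁻¹)` and `D_n^{≥2}(t) = t^n·D_n^{0,1}(t⁻¹)`. -/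
theorem subEuler01_reflect (n : ℕ) (hn : 2 ≤ n) :
    (∀ k : ℕ, k ≤ n → subEuler01 n k = subEulerGe2 n ((n : ℤ) - k)) ∧
    (∀ t : ℚ, t ≠ 0 → (polyD01 n).eval t = t ^ n * (polyDGe2 n).eval t⁻¹) ∧
    (∀ t : ℚ, t ≠ 0 → (polyDGe2 n).eval t = t ^ n * (polyD01 n).eval t⁻¹) := by
  have part2 : ∀ t : ℚ, t ≠ 0 → (polyD01 n).eval t = t ^ n * (polyDGe2 n).eval t⁻¹ := by
    intro t ht
    unfold polyD01 polyDGe2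
    rw [Polynomial.eval_finset_sum, Polynomial.eval_finset_sum]
    simp only [Polynomial.eval_pow, Polynomial.eval_X]
    rw [Finset.mul_sum]
    apply Finset.sum_bij' (i := fun p _ => Cor43.F n p) (j := fun p _ => Cor43.F n p)
    · intro a ha
      rw [Finset.mem_filter] at ha ⊢
      obtain ⟨-, haD, ha01⟩ := ha
      exact ⟨Finset.mem_univ _, (Cor43.inD_F hn a).mpr haD, Cor43.type01_F hn a ha01⟩
    · intro a ha
      rw [Finset.mem_filter] at ha ⊢
      obtain ⟨-, haD, haG⟩ := ha
      exact ⟨Finset.mem_univ _, (Cor43.inD_F hn a).mpr haD, Cor43.typeGe2_F hn a haG⟩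
    · intro a _; exact Cor43.F_F a
    · intro a _; exact Cor43.F_F a
    · intro a _
      rw [Cor43.d_F hn a, inv_pow]
      have hd := Cor43.d_le a
      have hpow : t ^ n = t ^ a.d * t ^ (n - a.d) := by
        rw [← pow_add]; congr 1; omega
      rw [hpow, mul_assoc, mul_inv_cancel₀ (pow_ne_zero _ ht), mul_one]
  refine ⟨?_, part2, ?_⟩
  · intro k hk
    unfold subEuler01 subEulerGe2
    apply Finset.card_bij' (i := fun p _ => Cor43.F n p) (j := fun p _ => Cor43.F n p)
    · intro a ha
      rw [Finset.mem_filter] at ha ⊢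
      obtain ⟨-, haD, ha01, had⟩ := ha
      refine ⟨Finset.mem_univ _, (Cor43.inD_F hn a).mpr haD, Cor43.type01_F hn a ha01, ?_⟩
      rw [Cor43.d_F hn a]
      have hd := Cor43.d_le a
      omega
    · intro a ha
      rw [Finset.mem_filter] at ha ⊢
      obtain ⟨-, haD, haG, had⟩ := ha
      refine ⟨Finset.mem_univ _, (Cor43.inD_F hn a).mpr haD, Cor43.typeGe2_F hn a haG, ?_⟩
      rw [Cor43.d_F hn a]
      have hd := Cor43.d_le a
      omega
    · intro a _; exact Cor43.F_F a
    · intro a _; exact Cor43.F_F a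
  · intro t ht
    have h2 := part2 t⁻¹ (inv_ne_zero ht)
    rw [inv_inv] at h2
    rw [h2, inv_pow, ← mul_assoc, mul_inv_cancel₀ (pow_ne_zero _ ht), one_mul]
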